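/- Let x1,…,xn > 0 with n ≥ 2 and let ξ1,…,ξn be independent exponentials with rates xi. Almost surely, all the pairwise intersection times s_{k,j} of the half-lines L'_k(s) = ξ_{(k)} - (∑_{m<k} x_{πm})·s, 1 ≤ j < k ≤ n, are distinct and strictly positive. -/

import Mathlib

open MeasureTheory ProbabilityTheory Real Finset

/-- The intersection time of the half-lines `L'_k` and `L'_j` of Uribe's diagram,
where `L'_k (s) = ξ_{(k)} - (x_{π 1} + … + x_{π (k-1)}) * s`. -/
noncomputable def interTime {n : ℕ} (x : Fin n → ℝ) (ξs : Fin n → ℝ)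
    (prm : Equiv.Perm (Fin n)) (j k : Fin n) : ℝ :=
  (ξs (prm k) - ξs (prm j)) /
    ((∑ m ∈ Finset.univ.filter (fun m : Fin n => m < k), x (prm m)) -
      ∑ m ∈ Finset.univ.filter (fun m : Fin n => m < j), x (prm m))

/-- The exponential measure has no atoms. -/
lemma expMeasure_singleton_aux (r t : ℝ) : expMeasure r {t} = 0 := by
  rw [expMeasure, gammaMeasure, withDensity_apply _ (measurableSet_singleton t)]
  exact setLIntegral_measure_zero _ _ (measure_singleton t)

/-- If `Z` and `W` are independent and the law of `W` has no atoms,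
then `Z + W = 0` has probability zero. -/
lemma addNull_aux {Ω : Type*} [MeasurableSpace Ω] (P : Measure Ω) [IsProbabilityMeasure P]
    (Z W : Ω → ℝ) (hZ : Measurable Z) (hW : Measurable W)
    (h : IndepFun Z W P) (hWs : ∀ t : ℝ, P (W ⁻¹' {t}) = 0) :
    P {ω | Z ω + W ω = 0} = 0 := by
  have hmap : P.map (fun ω => (Z ω, W ω)) = (P.map Z).prod (P.map W) :=
    (indepFun_iff_map_prod_eq_prod_map_map hZ.aemeasurable hW.aemeasurable).mp h
  have hS : MeasurableSet {p : ℝ × ℝ | p.1 + p.2 = 0} :=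
    (measurable_fst.add measurable_snd) (measurableSet_singleton 0)
  have h1 : P {ω | Z ω + W ω = 0} =
      ((P.map Z).prod (P.map W)) {p : ℝ × ℝ | p.1 + p.2 = 0} := by
    rw [← hmap, Measure.map_apply (hZ.prodMk hW) hS]
    rfl
  rw [h1, Measure.prod_apply hS]
  have h2 : ∀ z : ℝ, (P.map W) (Prod.mk z ⁻¹' {p : ℝ × ℝ | p.1 + p.2 = 0}) = 0 := by
    intro z
    have : Prod.mk z ⁻¹' {p : ℝ × ℝ | p.1 + p.2 = 0} = {-z} := by
      ext w
      simp [eq_neg_iff_add_eq_zero, add_comm]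
    rw [this, Measure.map_apply hW (measurableSet_singleton _), hWs]
  simp only [h2, lintegral_zero]

/-- A nontrivial linear combination of independent exponential random
variables is almost surely nonzero. -/
lemma sumNull_aux {Ω : Type*} [MeasurableSpace Ω] (P : Measure Ω) [IsProbabilityMeasure P]
    {n : ℕ} (x : Fin n → ℝ)
    (ξ : Fin n → Ω → ℝ) (hm : ∀ i, Measurable (ξ i))
    (hl : ∀ i, Measure.map (ξ i) P = expMeasure (x i))
    (hindep : iIndepFun ξ P)
    (c : Fin n → ℝ) (i0 : Fin n) (hc : c i0 ≠ 0) :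
    P {ω | ∑ i, c i * ξ i ω = 0} = 0 := by
  set g : Fin n → Ω → ℝ := fun i ω => c i * ξ i ω with hg
  have hgm : ∀ i, Measurable (g i) := fun i => (hm i).const_mul _
  have hgind : iIndepFun g P :=
    hindep.comp (fun i y => c i * y) (fun i => measurable_const_mul _)
  have hZW : IndepFun (∑ j ∈ Finset.univ.erase i0, g j) (g i0) P :=
    hgind.indepFun_finsetSum_of_notMem hgm (Finset.notMem_erase i0 _)
  have hWs : ∀ t : ℝ, P (g i0 ⁻¹' {t}) = 0 := by
    intro t
    have hpre : g i0 ⁻¹' {t} = ξ i0 ⁻¹' {t / c i0} := by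
      ext ω
      simp only [Set.mem_preimage, Set.mem_singleton_iff, g]
      rw [eq_div_iff hc, mul_comm]
    rw [hpre, ← Measure.map_apply (hm i0) (measurableSet_singleton _), hl i0]
    exact expMeasure_singleton_aux _ _
  have hZm : Measurable (∑ j ∈ Finset.univ.erase i0, g j) := by
    rw [Finset.sum_fn]
    exact Finset.measurable_sum _ fun i _ => hgm i
  have key := addNull_aux P (∑ j ∈ Finset.univ.erase i0, g j) (g i0)
    hZm (hgm i0) hZW hWs
  have hset : {ω | ∑ i, c i * ξ i ω = 0} =
      {ω | (∑ j ∈ Finset.univ.erase i0, g j) ω + g i0 ω = 0} := by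
    ext ω
    simp only [Set.mem_setOf_eq, Finset.sum_apply]
    rw [Finset.sum_erase_add _ _ (Finset.mem_univ i0)]
  rw [hset]
  exact key

/-- Almost surely, all pairwise intersection times of the half-lines of
Uribe's diagram are strictly positive and pairwise distinct. -/
theorem stmt14 {Ω : Type*} [MeasurableSpace Ω] (P : Measure Ω) [IsProbabilityMeasure P]
    (n : ℕ) (hn : 2 ≤ n) (x : Fin n → ℝ) (hx : ∀ i, 0 < x i)
    (ξ : Fin n → Ω → ℝ) (hm : ∀ i, Measurable (ξ i))
    (hl : ∀ i, Measure.map (ξ i) P = expMeasure (x i))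
    (hindep : iIndepFun ξ P)
    (prm : Ω → Equiv.Perm (Fin n))
    (hprm : ∀ᵐ ω ∂P, StrictMono (fun i => ξ (prm ω i) ω)) :
    ∀ᵐ ω ∂P,
      (∀ j k : Fin n, j < k → 0 < interTime x (fun i => ξ i ω) (prm ω) j k) ∧
      (∀ j k j' k' : Fin n, j < k → j' < k' → (j, k) ≠ (j', k') →
        interTime x (fun i => ξ i ω) (prm ω) j k ≠
          interTime x (fun i => ξ i ω) (prm ω) j' k') := by
  classical
  -- partial sums of the rates, reordered by a permutation
  set D : Equiv.Perm (Fin n) → Fin n → ℝ := fun σ k =>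
    ∑ m ∈ Finset.univ.filter (fun m : Fin n => m < k), x (σ m) with hDdef
  -- denominators are positive
  have hD : ∀ (σ : Equiv.Perm (Fin n)) (j k : Fin n), j < k → 0 < D σ k - D σ j := by
    intro σ j k hjk
    refine sub_pos.mpr ?_
    refine Finset.sum_lt_sum_of_subset ?_ (i := j) (by simp [hjk]) (by simp)
      (hx _) (fun m _ _ => (hx _).le)
    intro m hmem
    simp only [Finset.mem_filter, Finset.mem_univ, true_and] at hmem ⊢
    exact hmem.trans hjk
  -- coefficient vectors of the linear relations
  set c : Equiv.Perm (Fin n) → Fin n → Fin n → Fin n → Fin n → Fin n → ℝ :=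
    fun σ j k j' k' i =>
      (D σ k' - D σ j') * ((if i = σ k then 1 else 0) - (if i = σ j then 1 else 0)) -
      (D σ k - D σ j) * ((if i = σ k' then 1 else 0) - (if i = σ j' then 1 else 0)) with hcdef
  have h1 : ∀ (p : Fin n) (f : Fin n → ℝ),
      ∑ i, (if i = p then (1:ℝ) else 0) * f i = f p := by
    intro p f
    simp [ite_mul]
  have hsum : ∀ (σ : Equiv.Perm (Fin n)) (j k j' k' : Fin n) (f : Fin n → ℝ),
      ∑ i, c σ j k j' k' i * f i =
        (D σ k' - D σ j') * (f (σ k) - f (σ j)) -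
        (D σ k - D σ j) * (f (σ k') - f (σ j')) := by
    intro σ j k j' k' f
    have expand : ∀ i, c σ j k j' k' i * f i =
        (D σ k' - D σ j') * ((if i = σ k then (1:ℝ) else 0) * f i) -
        (D σ k' - D σ j') * ((if i = σ j then (1:ℝ) else 0) * f i) -
        ((D σ k - D σ j) * ((if i = σ k' then (1:ℝ) else 0) * f i) -
         (D σ k - D σ j) * ((if i = σ j' then (1:ℝ) else 0) * f i)) := by
      intro i
      simp only [hcdef]
      ring
    rw [Finset.sum_congr rfl fun i _ => expand i]
    rw [Finset.sum_sub_distrib, Finset.sum_sub_distrib, Finset.sum_sub_distrib,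
      ← Finset.mul_sum, ← Finset.mul_sum, ← Finset.mul_sum, ← Finset.mul_sum,
      h1, h1, h1, h1]
    ring
  -- the coefficient vector is nonzero
  have hcne : ∀ (σ : Equiv.Perm (Fin n)) (j k j' k' : Fin n), j < k → j' < k' →
      (j, k) ≠ (j', k') → ∃ i0, c σ j k j' k' i0 ≠ 0 := by
    intro σ j k j' k' hjk hj'k' hne
    rcases lt_trichotomy k k' with h | h | h
    · refine ⟨σ k', ?_⟩
      simp only [hcdef, EmbeddingLike.apply_eq_iff_eq, if_neg h.ne', eq_self_iff_true, if_true,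
        if_neg (hjk.trans h).ne', if_neg hj'k'.ne']
      have := (hD σ j k hjk).ne'
      intro habs
      apply this
      linarith
    · subst h
      have hjj' : j ≠ j' := by
        intro e
        exact hne (by rw [e])
      refine ⟨σ j, ?_⟩
      simp only [hcdef, EmbeddingLike.apply_eq_iff_eq, if_neg hjk.ne, eq_self_iff_true, if_true,
        if_neg hj'k'.ne, if_neg hjj']
      have := (hD σ j' k hj'k').ne'
      intro habs
      apply this
      linarith
    · refine ⟨σ k, ?_⟩
      simp only [hcdef, EmbeddingLike.apply_eq_iff_eq, eq_self_iff_true, if_true, if_neg hjk.ne',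
        if_neg h.ne', if_neg (hj'k'.trans h).ne']
      have := (hD σ j' k' hj'k').ne'
      intro habs
      apply this
      linarith
  -- almost surely none of the finitely many linear relations holds
  have Hnull : ∀ᵐ ω ∂P, ∀ σ : Equiv.Perm (Fin n), ∀ j k j' k' : Fin n,
      j < k → j' < k' → (j, k) ≠ (j', k') → ∑ i, c σ j k j' k' i * ξ i ω ≠ 0 := by
    rw [ae_all_iff]
    intro σ
    rw [ae_all_iff]
    intro j
    rw [ae_all_iff]
    intro k
    rw [ae_all_iff]
    intro j'
    rw [ae_all_iff]
    intro k'
    by_cases h : j < k ∧ j' < k' ∧ (j, k) ≠ (j', k')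
    · obtain ⟨hjk, hj'k', hne⟩ := h
      obtain ⟨i0, hi0⟩ := hcne σ j k j' k' hjk hj'k' hne
      have h0 := sumNull_aux P x ξ hm hl hindep (c σ j k j' k') i0 hi0
      exact (measure_eq_zero_iff_ae_notMem.mp h0).mono fun ω hω _ _ _ => hω
    · exact Filter.Eventually.of_forall fun ω hjk hj'k' hne =>
        absurd ⟨hjk, hj'k', hne⟩ h
  filter_upwards [hprm, Hnull] with ω hmono hnull
  constructor
  · intro j k hjk
    exact div_pos (sub_pos.mpr (hmono hjk)) (hD (prm ω) j k hjk)
  · intro j k j' k' hjk hj'k' hne heq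
    have hD1 := hD (prm ω) j k hjk
    have hD2 := hD (prm ω) j' k' hj'k'
    unfold interTime at heq
    rw [div_eq_div_iff hD1.ne' hD2.ne'] at heq
    refine hnull (prm ω) j k j' k' hjk hj'k' hne ?_
    rw [hsum (prm ω) j k j' k' (fun i => ξ i ω)]
    linear_combination heq
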